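/- Let 1 < p < r and f : ℝ → ℝ continuous with |f(t)| ≤ ξ|t|^{p-1} + C_ξ|t|^{r-1} for all t, and F(t) = ∫₀ᵗ f. Let {u_n} be bounded in L^p(ℝᴺ) ∩ L^r(ℝᴺ) with u_n → u a.e., and set v_n = u_n - u, where u ∈ L^p ∩ L^r. Then ∫_{ℝᴺ} (F(v_n) - F(u_n) + F(u)) dx → 0 as n → ∞. -/

import Mathlib

open Real MeasureTheory Filter Topology intervalIntegral
open scoped ENNReal

/-- Young-type inequality: `s * t ^ (p-1) ≤ ε t^p + ε^(1-p) s^p`. -/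
lemma young_aux {p ε s t : ℝ} (hp : 1 < p) (hε : 0 < ε) (hs : 0 ≤ s) (ht : 0 ≤ t) :
    s * t ^ (p - 1) ≤ ε * t ^ p + ε ^ (1 - p) * s ^ p := by
  have hp0 : (0:ℝ) < p - 1 := by linarith
  have hpow : ∀ x : ℝ, 0 ≤ x → x ^ p = x * x ^ (p - 1) := by
    intro x hx
    have h1 : x ^ ((1:ℝ) + (p - 1)) = x ^ (1:ℝ) * x ^ (p - 1) :=
      Real.rpow_add' hx (by linarith)
    rw [Real.rpow_one] at h1
    rw [← h1]; norm_num
  have hεp : 0 ≤ ε ^ (1 - p) * s ^ p := by positivity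
  rcases le_or_gt s (ε * t) with h | h
  · have h1 : s * t ^ (p - 1) ≤ (ε * t) * t ^ (p - 1) :=
      mul_le_mul_of_nonneg_right h (Real.rpow_nonneg ht _)
    have h2 : (ε * t) * t ^ (p - 1) = ε * t ^ p := by rw [hpow t ht]; ring
    linarith
  · have hts : t ≤ s / ε := by
      rw [le_div_iff₀ hε]; nlinarith
    have h1 : t ^ (p - 1) ≤ (s / ε) ^ (p - 1) :=
      Real.rpow_le_rpow ht hts hp0.le
    have h2 : (s / ε) ^ (p - 1) = s ^ (p - 1) * (ε ^ (p - 1))⁻¹ := by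
      rw [Real.div_rpow hs hε.le, div_eq_mul_inv]
    have h3 : (ε ^ (p - 1))⁻¹ = ε ^ (1 - p) := by
      rw [← Real.rpow_neg hε.le]; congr 1; ring
    have h4 : s * t ^ (p - 1) ≤ s * (s ^ (p - 1) * ε ^ (1 - p)) := by
      rw [← h3, ← h2]
      exact mul_le_mul_of_nonneg_left h1 hs
    have h5 : s * (s ^ (p - 1) * ε ^ (1 - p)) = ε ^ (1 - p) * s ^ p := by
      rw [hpow s hs]; ring
    have h6 : 0 ≤ ε * t ^ p := by positivity
    linarith
  
lemma two_rpow_aux {p s t : ℝ} (hp : 0 ≤ p) (hs : 0 ≤ s) (ht : 0 ≤ t) :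
    (s + t) ^ p ≤ 2 ^ p * (s ^ p + t ^ p) := by
  have hm : s + t ≤ 2 * max s t := by
    rcases le_total s t with h | h
    · rw [max_eq_right h]; linarith
    · rw [max_eq_left h]; linarith
  have h1 : (s + t) ^ p ≤ (2 * max s t) ^ p :=
    Real.rpow_le_rpow (by linarith) hm hp
  have h2 : (2 * max s t) ^ p = 2 ^ p * (max s t) ^ p :=
    Real.mul_rpow (by norm_num) (le_max_iff.mpr (Or.inl hs))
  have h3 : (max s t) ^ p ≤ s ^ p + t ^ p := by
    rcases le_total s t with h | h
    · rw [max_eq_right h]; nlinarith [Real.rpow_nonneg hs p]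
    · rw [max_eq_left h]; nlinarith [Real.rpow_nonneg ht p]
  calc (s + t) ^ p ≤ 2 ^ p * (max s t) ^ p := by rw [← h2]; exact h1
    _ ≤ 2 ^ p * (s ^ p + t ^ p) := by
        have : (0:ℝ) < 2 ^ p := Real.rpow_pos_of_pos (by norm_num) p
        nlinarith
  
/-- For every `η > 0` there is `C > 0` with `c * (s * (t+s)^(q-1)) ≤ η t^q + C s^q`. -/
lemma helper_aux {c q η : ℝ} (hc : 0 < c) (hq : 1 < q) (hη : 0 < η) :
    ∃ C : ℝ, 0 < C ∧ ∀ s t : ℝ, 0 ≤ s → 0 ≤ t →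
      c * (s * (t + s) ^ (q - 1)) ≤ η * t ^ q + C * s ^ q := by
  have h2q : (0:ℝ) < 2 ^ q := Real.rpow_pos_of_pos (by norm_num) q
  set ε := η / (c * 2 ^ q) with hε_def
  have hε : 0 < ε := by positivity
  refine ⟨η + c * ε ^ (1 - q), by positivity, fun s t hs ht => ?_⟩
  have hy : s * (t + s) ^ (q - 1) ≤ ε * (t + s) ^ q + ε ^ (1 - q) * s ^ q :=
    young_aux hq hε hs (by linarith)
  have hm : (t + s) ^ q ≤ 2 ^ q * (t ^ q + s ^ q) :=
    two_rpow_aux (by linarith) ht hs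
  have key : c * ε * (2 ^ q) = η := by
    rw [hε_def]; field_simp
  have hsq : 0 ≤ s ^ q := Real.rpow_nonneg hs q
  have htq : 0 ≤ t ^ q := Real.rpow_nonneg ht q
  have h1 : c * (s * (t + s) ^ (q - 1)) ≤ c * (ε * (t + s) ^ q + ε ^ (1 - q) * s ^ q) :=
    mul_le_mul_of_nonneg_left hy hc.le
  have h2 : c * ε * (t + s) ^ q ≤ c * ε * (2 ^ q * (t ^ q + s ^ q)) :=
    mul_le_mul_of_nonneg_left hm (by positivity)
  nlinarith [Real.rpow_nonneg (by linarith : (0:ℝ) ≤ t + s) q]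

theorem stmt15 (N : ℕ) (hN : 1 ≤ N) (p r ξ Cξ : ℝ) (hp : 1 < p) (hpr : p < r)
    (hξ : 0 < ξ) (hCξ : 0 < Cξ)
    (f : ℝ → ℝ) (hf : Continuous f)
    (hgrowth : ∀ t : ℝ, |f t| ≤ ξ * |t| ^ (p - 1) + Cξ * |t| ^ (r - 1))
    (F : ℝ → ℝ) (hF : ∀ t : ℝ, F t = ∫ τ in (0:ℝ)..t, f τ)
    (u : ℕ → EuclideanSpace ℝ (Fin N) → ℝ) (v : EuclideanSpace ℝ (Fin N) → ℝ)
    (hup : ∀ n, MemLp (u n) (ENNReal.ofReal p) volume)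
    (hur : ∀ n, MemLp (u n) (ENNReal.ofReal r) volume)
    (Cb : ℝ≥0∞) (hCb : Cb ≠ ⊤)
    (hbp : ∀ n, eLpNorm (u n) (ENNReal.ofReal p) volume ≤ Cb)
    (hbr : ∀ n, eLpNorm (u n) (ENNReal.ofReal r) volume ≤ Cb)
    (hvp : MemLp v (ENNReal.ofReal p) volume)
    (hvr : MemLp v (ENNReal.ofReal r) volume)
    (hae : ∀ᵐ x ∂(volume : Measure (EuclideanSpace ℝ (Fin N))),
      Tendsto (fun n => u n x) atTop (𝓝 (v x))) :
    Tendsto (fun n => ∫ x, (F (u n x - v x) - F (u n x) + F (v x)))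
      atTop (𝓝 0) := by
  have hp0 : (0:ℝ) < p := by linarith
  have hr1 : 1 < r := hp.trans hpr
  have hr0 : (0:ℝ) < r := by linarith
  -- continuity of F and F 0 = 0
  have hFeq : F = fun t => ∫ τ in (0:ℝ)..t, f τ := funext hF
  have hFcont : Continuous F := by
    rw [hFeq]
    exact intervalIntegral.continuous_primitive (fun a b => hf.intervalIntegrable a b) 0
  have hF0 : F 0 = 0 := by rw [hF]; simp
  -- growth of F
  have hFgrowth : ∀ t : ℝ, |F t| ≤ ξ * |t| ^ p + Cξ * |t| ^ r := by
    intro t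
    have hpow : ∀ x : ℝ, 0 ≤ x → ∀ q : ℝ, 1 < q → x ^ (q - 1) * x = x ^ q := by
      intro x hx q hq
      have h1 : x ^ ((q - 1) + 1) = x ^ (q - 1) * x ^ (1:ℝ) :=
        Real.rpow_add' hx (by linarith)
      rw [Real.rpow_one] at h1
      rw [← h1]; norm_num
    rw [hF]
    have hb : ∀ τ ∈ Set.uIoc (0:ℝ) t, ‖f τ‖ ≤ ξ * |t| ^ (p - 1) + Cξ * |t| ^ (r - 1) := by
      intro τ hτ
      have hτt : |τ| ≤ |t| := by
        rcases Set.mem_uIoc.mp hτ with h | h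
        · exact abs_le.mpr ⟨by linarith [h.1, abs_nonneg t], h.2.trans (le_abs_self t)⟩
        · exact abs_le.mpr ⟨by linarith [h.1, neg_abs_le t], by linarith [h.2, abs_nonneg t]⟩
      calc ‖f τ‖ = |f τ| := rfl
        _ ≤ ξ * |τ| ^ (p - 1) + Cξ * |τ| ^ (r - 1) := hgrowth τ
        _ ≤ ξ * |t| ^ (p - 1) + Cξ * |t| ^ (r - 1) := by
            have h1 := Real.rpow_le_rpow (abs_nonneg τ) hτt (by linarith : (0:ℝ) ≤ p - 1)
            have h2 := Real.rpow_le_rpow (abs_nonneg τ) hτt (by linarith : (0:ℝ) ≤ r - 1)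
            nlinarith
    have := intervalIntegral.norm_integral_le_of_norm_le_const hb
    calc |∫ τ in (0:ℝ)..t, f τ| = ‖∫ τ in (0:ℝ)..t, f τ‖ := rfl
      _ ≤ (ξ * |t| ^ (p - 1) + Cξ * |t| ^ (r - 1)) * |t - 0| := this
      _ = ξ * |t| ^ p + Cξ * |t| ^ r := by
          rw [sub_zero]
          rw [← hpow |t| (abs_nonneg t) p hp, ← hpow |t| (abs_nonneg t) r hr1]
          ring
  -- difference bound for F
  have hFdiff : ∀ a b M : ℝ, |a| ≤ M → |b| ≤ M →
      |F a - F b| ≤ |a - b| * (ξ * M ^ (p - 1) + Cξ * M ^ (r - 1)) := by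
    intro a b M ha hb
    have hM0 : 0 ≤ M := (abs_nonneg a).trans ha
    have heq : F a - F b = ∫ τ in b..a, f τ := by
      rw [hF, hF]
      exact intervalIntegral.integral_interval_sub_left
        (hf.intervalIntegrable 0 a) (hf.intervalIntegrable 0 b)
    have hbnd : ∀ τ ∈ Set.uIoc b a, ‖f τ‖ ≤ ξ * M ^ (p - 1) + Cξ * M ^ (r - 1) := by
      intro τ hτ
      have hτM : |τ| ≤ M := by
        rcases Set.mem_uIoc.mp hτ with h | h
        · exact abs_le.mpr ⟨by linarith [h.1, neg_abs_le b, (abs_le.mp hb).1],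
            h.2.trans ((le_abs_self a).trans ha)⟩
        · exact abs_le.mpr ⟨by linarith [h.1, neg_abs_le a, (abs_le.mp ha).1],
            h.2.trans ((le_abs_self b).trans hb)⟩
      calc ‖f τ‖ = |f τ| := rfl
        _ ≤ ξ * |τ| ^ (p - 1) + Cξ * |τ| ^ (r - 1) := hgrowth τ
        _ ≤ ξ * M ^ (p - 1) + Cξ * M ^ (r - 1) := by
            have h1 := Real.rpow_le_rpow (abs_nonneg τ) hτM (by linarith : (0:ℝ) ≤ p - 1)
            have h2 := Real.rpow_le_rpow (abs_nonneg τ) hτM (by linarith : (0:ℝ) ≤ r - 1)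
            nlinarith
    have := intervalIntegral.norm_integral_le_of_norm_le_const hbnd
    rw [heq]
    calc |∫ τ in b..a, f τ| = ‖∫ τ in b..a, f τ‖ := rfl
      _ ≤ (ξ * M ^ (p - 1) + Cξ * M ^ (r - 1)) * |a - b| := this
      _ = |a - b| * (ξ * M ^ (p - 1) + Cξ * M ^ (r - 1)) := by ring
  -- key pointwise estimate
  have key : ∀ η : ℝ, 0 < η → ∃ C : ℝ, 0 < C ∧ ∀ a b : ℝ,
      |F (a - b) - F a + F b| ≤ η * (|a| ^ p + |a| ^ r) + C * (|b| ^ p + |b| ^ r) := by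
    intro η hη
    obtain ⟨C₁, hC₁, h₁⟩ := helper_aux hξ hp hη
    obtain ⟨C₂, hC₂, h₂⟩ := helper_aux hCξ hr1 hη
    refine ⟨C₁ + C₂ + ξ + Cξ, by positivity, fun a b => ?_⟩
    set M := |a| + |b| with hM_def
    have hd : |F (a - b) - F a| ≤ |b| * (ξ * M ^ (p - 1) + Cξ * M ^ (r - 1)) := by
      have h := hFdiff (a - b) a M
        (by rw [hM_def]; exact (abs_sub _ _).trans (le_refl _))
        (by rw [hM_def]; nlinarith [abs_nonneg b])
      simpa [abs_sub_comm, sub_sub_cancel_left, abs_neg] using h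
    have hfb := hFgrowth b
    have hy1 := h₁ |b| |a| (abs_nonneg b) (abs_nonneg a)
    have hy2 := h₂ |b| |a| (abs_nonneg b) (abs_nonneg a)
    have habs : |F (a - b) - F a + F b| ≤ |F (a - b) - F a| + |F b| := abs_add_le _ _
    have hbp0 : 0 ≤ |b| ^ p := Real.rpow_nonneg (abs_nonneg b) p
    have hbr0 : 0 ≤ |b| ^ r := Real.rpow_nonneg (abs_nonneg b) r
    have hap0 : 0 ≤ |a| ^ p := Real.rpow_nonneg (abs_nonneg a) p
    have har0 : 0 ≤ |a| ^ r := Real.rpow_nonneg (abs_nonneg a) r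
    have hMdist : |b| * (ξ * M ^ (p - 1) + Cξ * M ^ (r - 1)) =
        ξ * (|b| * (|a| + |b|) ^ (p - 1)) + Cξ * (|b| * (|a| + |b|) ^ (r - 1)) := by
      rw [hM_def]; ring
    rw [hMdist] at hd
    linarith [mul_nonneg hC₂.le hbp0, mul_nonneg hC₁.le hbr0,
      mul_nonneg hCξ.le hbp0, mul_nonneg hξ.le hbr0]
  -- measurability & integrability facts
  have hum : ∀ n, AEStronglyMeasurable (u n) (volume : Measure (EuclideanSpace ℝ (Fin N))) :=
    fun n => (hup n).1
  have hvm : AEStronglyMeasurable v (volume : Measure (EuclideanSpace ℝ (Fin N))) := hvp.1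
  have hcp : Continuous (fun t : ℝ => |t| ^ p) :=
    continuous_abs.rpow_const (fun x => Or.inr hp0.le)
  have hcr : Continuous (fun t : ℝ => |t| ^ r) :=
    continuous_abs.rpow_const (fun x => Or.inr hr0.le)
  have hIbound : ∀ (q : ℝ), 0 < q → ∀ (w : EuclideanSpace ℝ (Fin N) → ℝ),
      MemLp w (ENNReal.ofReal q) volume → eLpNorm w (ENNReal.ofReal q) volume ≤ Cb →
      ∫ x, |w x| ^ q ≤ Cb.toReal ^ q := by
    intro q hq w hw hle
    have hq0 : ENNReal.ofReal q ≠ 0 := by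
      simp only [ne_eq, ENNReal.ofReal_eq_zero, not_le]; linarith
    have heq := hw.eLpNorm_eq_integral_rpow_norm hq0 ENNReal.ofReal_ne_top
    rw [ENNReal.toReal_ofReal hq.le] at heq
    rw [heq] at hle
    have hI0 : 0 ≤ ∫ x, ‖w x‖ ^ q :=
      integral_nonneg (fun x => Real.rpow_nonneg (norm_nonneg _) q)
    have h1 : (∫ x, ‖w x‖ ^ q) ^ q⁻¹ ≤ Cb.toReal :=
      (ENNReal.ofReal_le_iff_le_toReal hCb).mp (by simpa [one_div] using hle)
    have h2 : ((∫ x, ‖w x‖ ^ q) ^ q⁻¹) ^ q ≤ Cb.toReal ^ q :=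
      Real.rpow_le_rpow (Real.rpow_nonneg hI0 _) h1 hq.le
    have h3 : ((∫ x, ‖w x‖ ^ q) ^ q⁻¹) ^ q = ∫ x, ‖w x‖ ^ q := by
      rw [← Real.rpow_mul hI0, inv_mul_cancel₀ (ne_of_gt hq), Real.rpow_one]
    rw [h3] at h2
    simpa [Real.norm_eq_abs] using h2
  have hIw : ∀ (q : ℝ), 0 < q → ∀ (w : EuclideanSpace ℝ (Fin N) → ℝ),
      MemLp w (ENNReal.ofReal q) volume →
      Integrable (fun x => |w x| ^ q) volume := by
    intro q hq w hw
    have hq0 : ENNReal.ofReal q ≠ 0 := by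
      simp only [ne_eq, ENNReal.ofReal_eq_zero, not_le]; linarith
    have := hw.integrable_norm_rpow hq0 ENNReal.ofReal_ne_top
    rw [ENNReal.toReal_ofReal hq.le] at this
    simpa [Real.norm_eq_abs] using this
  rw [NormedAddCommGroup.tendsto_nhds_zero]
  intro ε hε
  set S : ℝ := Cb.toReal ^ p + Cb.toReal ^ r with hS_def
  have hS0 : 0 ≤ S := by
    rw [hS_def]
    have h1 : 0 ≤ Cb.toReal ^ p := Real.rpow_nonneg ENNReal.toReal_nonneg p
    have h2 : 0 ≤ Cb.toReal ^ r := Real.rpow_nonneg ENNReal.toReal_nonneg r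
    linarith
  set η : ℝ := ε / (2 * S + 2) with hη_def
  have hη : 0 < η := by rw [hη_def]; positivity
  obtain ⟨C, hC, hkey⟩ := key η hη
  set g : ℕ → EuclideanSpace ℝ (Fin N) → ℝ := fun n x =>
    max (|F (u n x - v x) - F (u n x) + F (v x)| - η * (|u n x| ^ p + |u n x| ^ r)) 0
    with hg_def
  have hg_nonneg : ∀ n x, 0 ≤ g n x := fun n x => le_max_right _ _
  have hg_le : ∀ n x, g n x ≤ C * (|v x| ^ p + |v x| ^ r) := by
    intro n x
    apply max_le
    · have := hkey (u n x) (v x); linarith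
    · have h1 : 0 ≤ |v x| ^ p := Real.rpow_nonneg (abs_nonneg _) p
      have h2 : 0 ≤ |v x| ^ r := Real.rpow_nonneg (abs_nonneg _) r
      nlinarith
  have hh_meas : ∀ n, AEStronglyMeasurable
      (fun x => F (u n x - v x) - F (u n x) + F (v x))
      (volume : Measure (EuclideanSpace ℝ (Fin N))) := fun n =>
    ((hFcont.comp_aestronglyMeasurable ((hum n).sub hvm)).sub
      (hFcont.comp_aestronglyMeasurable (hum n))).add
      (hFcont.comp_aestronglyMeasurable hvm)
  have hg_meas : ∀ n, AEStronglyMeasurable (g n)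
      (volume : Measure (EuclideanSpace ℝ (Fin N))) := by
    intro n
    apply Continuous.comp_aestronglyMeasurable (g := fun y : ℝ => max y 0)
      (continuous_id.max continuous_const)
    exact (continuous_abs.comp_aestronglyMeasurable (hh_meas n)).sub
      (aestronglyMeasurable_const.mul
        ((hcp.comp_aestronglyMeasurable (hum n)).add (hcr.comp_aestronglyMeasurable (hum n))))
  have hdom : Integrable (fun x => C * (|v x| ^ p + |v x| ^ r)) volume :=
    ((hIw p hp0 v hvp).add (hIw r hr0 v hvr)).const_mul C
  have hg_tendsto : ∀ᵐ x ∂(volume : Measure (EuclideanSpace ℝ (Fin N))),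
      Tendsto (fun n => g n x) atTop (𝓝 0) := by
    filter_upwards [hae] with x hx
    have T1 : Tendsto (fun n => u n x - v x) atTop (𝓝 0) := by
      simpa using hx.sub_const (v x)
    have T2 : Tendsto (fun n => F (u n x - v x)) atTop (𝓝 0) := by
      have := (hFcont.tendsto 0).comp T1
      simpa [hF0, Function.comp_def] using this
    have T3 : Tendsto (fun n => F (u n x)) atTop (𝓝 (F (v x))) :=
      (hFcont.tendsto (v x)).comp hx
    have T4 : Tendsto (fun n => |u n x| ^ p) atTop (𝓝 (|v x| ^ p)) :=
      (hcp.tendsto (v x)).comp hx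
    have T5 : Tendsto (fun n => |u n x| ^ r) atTop (𝓝 (|v x| ^ r)) :=
      (hcr.tendsto (v x)).comp hx
    have T6 : Tendsto (fun n => |F (u n x - v x) - F (u n x) + F (v x)|) atTop (𝓝 0) := by
      have h0 : Tendsto (fun n => F (u n x - v x) - F (u n x) + F (v x)) atTop (𝓝 0) := by
        have := (T2.sub T3).add_const (F (v x))
        simpa using this
      simpa using h0.abs
    have T7 : Tendsto (fun n => g n x) atTop
        (𝓝 (max (0 - η * (|v x| ^ p + |v x| ^ r)) 0)) :=
      (T6.sub ((T4.add T5).const_mul η)).max tendsto_const_nhds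
    have hval : max (0 - η * (|v x| ^ p + |v x| ^ r)) 0 = 0 := by
      apply max_eq_right
      have h1 : 0 ≤ |v x| ^ p := Real.rpow_nonneg (abs_nonneg _) p
      have h2 : 0 ≤ |v x| ^ r := Real.rpow_nonneg (abs_nonneg _) r
      nlinarith
    rwa [hval] at T7
  have hGint : Tendsto (fun n => ∫ x, g n x) atTop (𝓝 0) := by
    have := tendsto_integral_of_dominated_convergence (f := fun _ => (0:ℝ))
      (fun x => C * (|v x| ^ p + |v x| ^ r)) hg_meas hdom
      (fun n => Eventually.of_forall (fun x => by
        rw [Real.norm_eq_abs, abs_of_nonneg (hg_nonneg n x)]; exact hg_le n x)) hg_tendsto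
    simpa using this
  have hgint : ∀ n, Integrable (g n) volume := by
    intro n
    refine Integrable.mono' hdom (hg_meas n) (Eventually.of_forall fun x => ?_)
    rw [Real.norm_eq_abs, abs_of_nonneg (hg_nonneg n x)]; exact hg_le n x
  have hAint : ∀ n, Integrable (fun x => η * (|u n x| ^ p + |u n x| ^ r)) volume :=
    fun n => ((hIw p hp0 (u n) (hup n)).add (hIw r hr0 (u n) (hur n))).const_mul η
  have hh_le : ∀ n x, |F (u n x - v x) - F (u n x) + F (v x)| ≤
      g n x + η * (|u n x| ^ p + |u n x| ^ r) := by
    intro n x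
    have h : |F (u n x - v x) - F (u n x) + F (v x)| -
        η * (|u n x| ^ p + |u n x| ^ r) ≤ g n x := le_max_left _ _
    linarith
  have hh_int : ∀ n, Integrable (fun x => F (u n x - v x) - F (u n x) + F (v x)) volume := by
    intro n
    refine Integrable.mono' ((hgint n).add (hAint n)) (hh_meas n)
      (Eventually.of_forall fun x => ?_)
    rw [Real.norm_eq_abs]
    exact hh_le n x
  have hfinal : ∀ n, ‖∫ x, (F (u n x - v x) - F (u n x) + F (v x))‖ ≤
      (∫ x, g n x) + η * S := by
    intro n
    calc ‖∫ x, (F (u n x - v x) - F (u n x) + F (v x))‖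
        ≤ ∫ x, ‖F (u n x - v x) - F (u n x) + F (v x)‖ := norm_integral_le_integral_norm _
      _ ≤ ∫ x, (g n x + η * (|u n x| ^ p + |u n x| ^ r)) := by
          refine integral_mono (hh_int n).norm ((hgint n).add (hAint n)) (fun x => ?_)
          rw [Real.norm_eq_abs]
          exact hh_le n x
      _ = (∫ x, g n x) + η * ((∫ x, |u n x| ^ p) + ∫ x, |u n x| ^ r) := by
          rw [integral_add (hgint n) (hAint n), MeasureTheory.integral_const_mul,
            integral_add (hIw p hp0 (u n) (hup n)) (hIw r hr0 (u n) (hur n))]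
      _ ≤ (∫ x, g n x) + η * S := by
          have h1 := hIbound p hp0 (u n) (hup n) (hbp n)
          have h2 := hIbound r hr0 (u n) (hur n) (hbr n)
          have h3 : (∫ x, |u n x| ^ p) + ∫ x, |u n x| ^ r ≤ S := by
            rw [hS_def]; linarith
          nlinarith
  have hev : ∀ᶠ n in atTop, (∫ x, g n x) < ε / 2 :=
    hGint.eventually_lt_const (by linarith)
  filter_upwards [hev] with n hn
  have hident : η * (2 * S + 2) = ε := by
    rw [hη_def]; field_simp
  have hηS : η * S < ε / 2 := by nlinarith
  have := hfinal n
  calc ‖∫ x, (F (u n x - v x) - F (u n x) + F (v x))‖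
      ≤ (∫ x, g n x) + η * S := this
    _ < ε / 2 + ε / 2 := by linarith
    _ = ε := by ring
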